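/- The Grünwald–Durrmeyer operators reproduce constants: for every n ≥ 1 and every θ ∈ [0, π], D_n(1)(θ) = 1, where D_n(f)(θ) = (n/π)·∑_{k=1}^n S_{k,n}(θ)·∫₀^π f(t)·S_{k,n}(t) dt. -/

import Mathlib

open Real MeasureTheory Set Filter

/-- Chebyshev angles `θ_k = (2k-1)π/(2n)`. -/
noncomputable def cheb (n k : ℕ) : ℝ := (2 * (k : ℝ) - 1) * π / (2 * n)

/-- Fundamental Lagrange polynomials at Chebyshev nodes, in the angular
variable, extended continuously through the removable singularities. -/
noncomputable def P (n k : ℕ) (t : ℝ) : ℝ :=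
  if Real.cos t = Real.cos (cheb n k) then
    (-1) ^ (k + 1) * Real.sin (n * t) * Real.sin (cheb n k) / Real.sin t
  else
    (-1) ^ (k + 1) * Real.cos (n * t) * Real.sin (cheb n k) /
      (n * (Real.cos t - Real.cos (cheb n k)))

/-- `S_{k,n}(t) = (P_k(t - π/(2n)) + P_k(t + π/(2n)))/2`. -/
noncomputable def S (n k : ℕ) (t : ℝ) : ℝ :=
  (P n k (t - π / (2 * n)) + P n k (t + π / (2 * n))) / 2

/-- The Grünwald–Durrmeyer operator. -/
noncomputable def D (n : ℕ) (f : ℝ → ℝ) (θ : ℝ) : ℝ :=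
  (n / π) * ∑ k ∈ Finset.Icc 1 n, S n k θ * ∫ t in (0:ℝ)..π, f t * S n k t

section basic
variable {n k : ℕ}

lemma cheb_pos (hk : 1 ≤ k) (hn : 1 ≤ n) : 0 < cheb n k := by
  unfold cheb
  apply div_pos
  · apply mul_pos _ Real.pi_pos
    have : (1:ℝ) ≤ (k:ℝ) := by exact_mod_cast hk
    linarith
  · positivity

lemma cheb_lt_pi (hk : k ≤ n) (hn : 1 ≤ n) : cheb n k < π := by
  unfold cheb
  rw [div_lt_iff₀ (by positivity)]
  have hkn : (k:ℝ) ≤ (n:ℝ) := by exact_mod_cast hk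
  nlinarith [Real.pi_pos]

lemma sin_cheb_pos (hk : 1 ≤ k) (hkn : k ≤ n) : 0 < Real.sin (cheb n k) :=
  Real.sin_pos_of_pos_of_lt_pi (cheb_pos hk (le_trans hk hkn)) (cheb_lt_pi hkn (le_trans hk hkn))

lemma cos_nat_pi (m : ℕ) : Real.cos ((m:ℝ) * π) = (-1)^m := by
  simpa using Real.cos_nat_mul_pi_sub (0:ℝ) m

lemma n_mul_cheb (hn : 1 ≤ n) : (n:ℝ) * cheb n k = (k:ℝ) * π - π/2 := by
  have hn' : (n:ℝ) ≠ 0 := by positivity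
  unfold cheb; field_simp

lemma cos_n_cheb (hn : 1 ≤ n) : Real.cos ((n:ℝ) * cheb n k) = 0 := by
  rw [n_mul_cheb hn, Real.cos_sub, Real.cos_pi_div_two, Real.sin_pi_div_two,
    Real.sin_nat_mul_pi]
  ring

lemma sin_n_cheb (hn : 1 ≤ n) : Real.sin ((n:ℝ) * cheb n k) = (-1)^(k+1) := by
  rw [n_mul_cheb hn, Real.sin_sub, Real.cos_pi_div_two, Real.sin_pi_div_two,
    Real.sin_nat_mul_pi, cos_nat_pi, pow_succ]
  ring

lemma cos_nsub1_cheb (hn : 1 ≤ n) :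
    Real.cos (((n:ℝ) - 1) * cheb n k) = (-1)^(k+1) * Real.sin (cheb n k) := by
  have : ((n:ℝ) - 1) * cheb n k = (n:ℝ) * cheb n k - cheb n k := by ring
  rw [this, Real.cos_sub, cos_n_cheb hn, sin_n_cheb hn]
  ring

/-- Key telescoping identity. -/
lemma keyid (hn : 1 ≤ n) (t θ' : ℝ) :
    (Real.cos t - Real.cos θ') *
      (1 + 2 * ∑ j ∈ Finset.range (n-1),
        Real.cos (((j:ℝ)+1) * θ') * Real.cos (((j:ℝ)+1) * t))
    = Real.cos ((n:ℝ) * t) * Real.cos (((n:ℝ)-1) * θ')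
      - Real.cos (((n:ℝ)-1) * t) * Real.cos ((n:ℝ) * θ') := by
  set g : ℕ → ℝ := fun j =>
    Real.cos (((j:ℝ)+1) * t) * Real.cos ((j:ℝ) * θ')
      - Real.cos ((j:ℝ) * t) * Real.cos (((j:ℝ)+1) * θ') with hg
  have tele : ∑ j ∈ Finset.range (n-1), (g (j+1) - g j) = g (n-1) - g 0 :=
    Finset.sum_range_sub g (n-1)
  have step : ∀ j : ℕ, g (j+1) - g j
      = (Real.cos t - Real.cos θ') * (2 * (Real.cos (((j:ℝ)+1) * θ') * Real.cos (((j:ℝ)+1) * t))) := by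
    intro j
    simp only [hg]
    push_cast
    have e1 : ((j:ℝ)+1+1) * t = ((j:ℝ)+1) * t + t := by ring
    have e2 : (j:ℝ) * t = ((j:ℝ)+1) * t - t := by ring
    have e3 : ((j:ℝ)+1+1) * θ' = ((j:ℝ)+1) * θ' + θ' := by ring
    have e4 : (j:ℝ) * θ' = ((j:ℝ)+1) * θ' - θ' := by ring
    rw [e1, e2, e3, e4, Real.cos_add, Real.cos_sub, Real.cos_add, Real.cos_sub]
    ring
  have sumstep : ∑ j ∈ Finset.range (n-1), (g (j+1) - g j)
      = (Real.cos t - Real.cos θ') *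
        (2 * ∑ j ∈ Finset.range (n-1), Real.cos (((j:ℝ)+1) * θ') * Real.cos (((j:ℝ)+1) * t)) := by
    rw [Finset.sum_congr rfl fun j (_ : j ∈ Finset.range (n-1)) => step j, ← Finset.mul_sum]
    congr 1
    rw [Finset.mul_sum]
  have g0 : g 0 = Real.cos t - Real.cos θ' := by simp [hg]
  have gn : g (n-1) = Real.cos ((n:ℝ) * t) * Real.cos (((n:ℝ)-1) * θ')
      - Real.cos (((n:ℝ)-1) * t) * Real.cos ((n:ℝ) * θ') := by
    simp only [hg]
    have hc : ((n-1 : ℕ) : ℝ) = (n:ℝ) - 1 := by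
      have := Nat.cast_sub hn (R := ℝ); simpa using this
    rw [hc]
    ring_nf
  calc (Real.cos t - Real.cos θ') * (1 + 2 * ∑ j ∈ Finset.range (n-1),
        Real.cos (((j:ℝ)+1) * θ') * Real.cos (((j:ℝ)+1) * t))
      = (Real.cos t - Real.cos θ') +
        ∑ j ∈ Finset.range (n-1), (g (j+1) - g j) := by rw [sumstep]; ring
    _ = g 0 + (g (n-1) - g 0) := by rw [tele, g0]
    _ = g (n-1) := by ring
    _ = _ := gn


/-- `∑_{j=1}^{n-1} cos(2 j θ_k) = 0`. -/
lemma sum_cos_two (hk : 1 ≤ k) (hkn : k ≤ n) :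
    ∑ j ∈ Finset.range (n-1), Real.cos (2 * ((j:ℝ)+1) * cheb n k) = 0 := by
  have hn : 1 ≤ n := le_trans hk hkn
  set θ' := cheb n k with hθ'
  have hs : Real.sin θ' ≠ 0 := ne_of_gt (sin_cheb_pos hk hkn)
  set f : ℕ → ℝ := fun j => Real.sin ((2*(j:ℝ)+1) * θ') with hf
  have tele : ∑ j ∈ Finset.range (n-1), (f (j+1) - f j) = f (n-1) - f 0 :=
    Finset.sum_range_sub f (n-1)
  have step : ∀ j : ℕ, f (j+1) - f j = 2 * Real.sin θ' * Real.cos (2*((j:ℝ)+1) * θ') := by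
    intro j
    simp only [hf]
    push_cast
    have e1 : (2*((j:ℝ)+1)+1) * θ' = (2*((j:ℝ)+1)) * θ' + θ' := by ring
    have e2 : (2*(j:ℝ)+1) * θ' = (2*((j:ℝ)+1)) * θ' - θ' := by ring
    rw [e1, e2, Real.sin_add, Real.sin_sub]
    ring
  have fn : f (n-1) = f 0 := by
    simp only [hf]
    have hc : ((n-1 : ℕ) : ℝ) = (n:ℝ) - 1 := by
      have := Nat.cast_sub hn (R := ℝ); simpa using this
    have h2n : (2*((n:ℝ)-1)+1) * θ' = ((2*k-1 : ℕ) : ℝ) * π - θ' := by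
      have := n_mul_cheb (k := k) hn
      push_cast [Nat.cast_sub (by omega : 1 ≤ 2*k)]
      rw [← hθ'] at this
      nlinarith [this]
    rw [hc, h2n, Real.sin_nat_mul_pi_sub]
    have : (2*k-1 : ℕ) = 2*(k-1)+1 := by omega
    rw [this, pow_succ, pow_mul]
    simp
  have : ∑ j ∈ Finset.range (n-1), (f (j+1) - f j)
      = 2 * Real.sin θ' * ∑ j ∈ Finset.range (n-1), Real.cos (2*((j:ℝ)+1) * θ') := by
    rw [Finset.sum_congr rfl fun j (_ : j ∈ Finset.range (n-1)) => step j, ← Finset.mul_sum]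
  rw [tele, fn, sub_self] at this
  have h2 : (2 : ℝ) * Real.sin θ' ≠ 0 := by positivity
  have := this.symm
  rcases mul_eq_zero.mp this with h | h
  · exact absurd h h2
  · exact h

/-- `1 + 2 ∑ cos² = n`. -/
lemma sum_sq (hk : 1 ≤ k) (hkn : k ≤ n) :
    1 + 2 * ∑ j ∈ Finset.range (n-1),
      Real.cos (((j:ℝ)+1) * cheb n k) * Real.cos (((j:ℝ)+1) * cheb n k) = (n:ℝ) := by
  have hn : 1 ≤ n := le_trans hk hkn
  have hsq : ∀ j : ℕ, Real.cos (((j:ℝ)+1) * cheb n k) * Real.cos (((j:ℝ)+1) * cheb n k)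
      = (1 + Real.cos (2 * ((j:ℝ)+1) * cheb n k)) / 2 := by
    intro j
    have := Real.cos_sq (((j:ℝ)+1) * cheb n k)
    rw [pow_two] at this
    rw [this]
    rw [show 2 * (((j:ℝ)+1)) * cheb n k = 2 * ((((j:ℝ)+1)) * cheb n k) by ring]
    ring
  rw [Finset.sum_congr rfl fun j (_ : j ∈ Finset.range (n-1)) => hsq j]
  have expand : ∑ j ∈ Finset.range (n-1), (1 + Real.cos (2 * ((j:ℝ)+1) * cheb n k)) / 2
      = ((n-1 : ℕ) + ∑ j ∈ Finset.range (n-1), Real.cos (2 * ((j:ℝ)+1) * cheb n k)) / 2 := by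
    rw [← Finset.sum_div, Finset.sum_add_distrib]
    simp
  rw [expand, sum_cos_two hk hkn]
  have hc : ((n-1 : ℕ) : ℝ) = (n:ℝ) - 1 := by
    have := Nat.cast_sub hn (R := ℝ); simpa using this
  rw [hc]
  ring

/-- For `1 ≤ j+1 ≤ n-1`, `∑_{k=1}^n cos((j+1) θ_k) = 0`. -/
lemma sum_over_nodes {n j : ℕ} (hn : 1 ≤ n) (hj : j < n - 1) :
    ∑ k ∈ Finset.Icc 1 n, Real.cos (((j:ℝ)+1) * cheb n k) = 0 := by
  have hn' : (n:ℝ) ≠ 0 := by positivity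
  set b : ℝ := ((j:ℝ)+1) * π / (2*n) with hb
  have hbpos : 0 < b := by positivity
  have hblt : b < π := by
    rw [hb, div_lt_iff₀ (by positivity)]
    have : (j:ℝ) + 1 ≤ (n:ℝ) - 1 := by
      have : (j:ℝ) + 1 ≤ ((n-1 : ℕ):ℝ) := by exact_mod_cast hj
      have hc : ((n-1 : ℕ) : ℝ) = (n:ℝ) - 1 := by
        have := Nat.cast_sub hn (R := ℝ); simpa using this
      linarith [hc ▸ this]
    nlinarith [Real.pi_pos]
  have hsb : Real.sin b ≠ 0 := ne_of_gt (Real.sin_pos_of_pos_of_lt_pi hbpos hblt)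
  have hcheb : ∀ i : ℕ, ((j:ℝ)+1) * cheb n (i+1) = (2*(i:ℝ)+1) * b := by
    intro i
    rw [hb]
    unfold cheb
    push_cast
    field_simp
    ring
  set f : ℕ → ℝ := fun i => Real.sin (2*(i:ℝ) * b) with hf
  have step : ∀ i : ℕ, f (i+1) - f i = 2 * Real.sin b * Real.cos ((2*(i:ℝ)+1) * b) := by
    intro i
    simp only [hf]
    push_cast
    have e1 : 2*((i:ℝ)+1) * b = (2*(i:ℝ)+1) * b + b := by ring
    have e2 : 2*(i:ℝ) * b = (2*(i:ℝ)+1) * b - b := by ring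
    rw [e1, e2, Real.sin_add, Real.sin_sub]
    ring
  have tele : ∑ i ∈ Finset.range n, (f (i+1) - f i) = f n - f 0 := Finset.sum_range_sub f n
  have fn : f n = 0 := by
    simp only [hf, hb]
    have : 2*(n:ℝ) * (((j:ℝ)+1) * π / (2*n)) = ((j+1 : ℕ):ℝ) * π := by
      push_cast; field_simp
    rw [this, Real.sin_nat_mul_pi]
  have f0 : f 0 = 0 := by simp [hf]
  have key : ∑ i ∈ Finset.range n, Real.cos ((2*(i:ℝ)+1) * b) = 0 := by
    have h1 : ∑ i ∈ Finset.range n, (f (i+1) - f i)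
        = 2 * Real.sin b * ∑ i ∈ Finset.range n, Real.cos ((2*(i:ℝ)+1) * b) := by
      rw [Finset.sum_congr rfl fun i (_ : i ∈ Finset.range n) => step i, ← Finset.mul_sum]
    rw [tele, fn, f0, sub_self] at h1
    have h2 : (2 : ℝ) * Real.sin b ≠ 0 := by
      simp only [ne_eq, mul_eq_zero]
      push_neg
      exact ⟨two_ne_zero, hsb⟩
    rcases mul_eq_zero.mp h1.symm with h | h
    · exact absurd h h2
    · exact h
  calc ∑ k ∈ Finset.Icc 1 n, Real.cos (((j:ℝ)+1) * cheb n k)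
      = ∑ i ∈ Finset.range n, Real.cos (((j:ℝ)+1) * cheb n (1+i)) := by
        rw [← Finset.Ico_add_one_right_eq_Icc, Finset.sum_Ico_eq_sum_range]
        simp
    _ = ∑ i ∈ Finset.range n, Real.cos ((2*(i:ℝ)+1) * b) := by
        apply Finset.sum_congr rfl
        intro i _
        rw [show 1 + i = i + 1 by ring, hcheb i]
    _ = 0 := key

lemma P_eq (hk : 1 ≤ k) (hkn : k ≤ n) (t : ℝ) :
    P n k t = (1/(n:ℝ)) * (1 + 2 * ∑ j ∈ Finset.range (n-1),
      Real.cos (((j:ℝ)+1) * cheb n k) * Real.cos (((j:ℝ)+1) * t)) := by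
  have hn : 1 ≤ n := le_trans hk hkn
  have hn' : (n:ℝ) ≠ 0 := by positivity
  have hs : Real.sin (cheb n k) ≠ 0 := ne_of_gt (sin_cheb_pos hk hkn)
  have hkey := keyid hn t (cheb n k)
  rw [cos_n_cheb hn, cos_nsub1_cheb hn, mul_zero, sub_zero] at hkey
  by_cases hct : Real.cos t = Real.cos (cheb n k)
  · rw [P, if_pos hct]
    have hone : ((-1:ℝ))^(k+1) * (-1:ℝ)^(k+1) = 1 := by
      rw [← pow_add]
      exact Even.neg_one_pow ⟨k+1, by ring⟩
    have main : ∀ (hc : ∀ r : ℕ, Real.cos ((r:ℝ)*t) = Real.cos ((r:ℝ)*cheb n k))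
        (hsn : Real.sin ((n:ℝ)*t) = Real.sin ((n:ℝ)*cheb n k) ∨
               Real.sin ((n:ℝ)*t) = -Real.sin ((n:ℝ)*cheb n k))
        (hst : (Real.sin ((n:ℝ)*t) = Real.sin ((n:ℝ)*cheb n k) →
                  Real.sin t = Real.sin (cheb n k)) ∧
               (Real.sin ((n:ℝ)*t) = -Real.sin ((n:ℝ)*cheb n k) →
                  Real.sin t = -Real.sin (cheb n k))), True := fun _ _ _ => trivial
    clear main
    rcases Real.cos_eq_cos_iff.mp hct with ⟨m, hm | hm⟩
    · -- cheb n k = 2*m*π + t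
      have hr : ∀ r : ℕ, (r:ℝ)*t = (r:ℝ)*cheb n k + ((-(r*m) : ℤ):ℝ)*(2*π) := by
        intro r
        have ht : t = cheb n k + ((-m : ℤ):ℝ)*(2*π) := by push_cast; linarith [hm]
        rw [ht]; push_cast; ring
      have hc : ∀ r : ℕ, Real.cos ((r:ℝ)*t) = Real.cos ((r:ℝ)*cheb n k) := by
        intro r; rw [hr r, Real.cos_add_int_mul_two_pi]
      have hsn : Real.sin ((n:ℝ)*t) = (-1:ℝ)^(k+1) := by
        rw [hr n, Real.sin_add_int_mul_two_pi, sin_n_cheb hn]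
      have hst : Real.sin t = Real.sin (cheb n k) := by
        have := hr 1
        simp only [Nat.cast_one, one_mul] at this
        rw [this, Real.sin_add_int_mul_two_pi]
      rw [hsn, hst, hone]
      have hsum : ∀ j : ℕ, j ∈ Finset.range (n-1) →
          Real.cos (((j:ℝ)+1) * cheb n k) * Real.cos (((j:ℝ)+1) * t)
          = Real.cos (((j:ℝ)+1) * cheb n k) * Real.cos (((j:ℝ)+1) * cheb n k) := by
        intro j _
        have := hc (j+1)
        push_cast at this
        rw [this]
      rw [Finset.sum_congr rfl hsum, sum_sq hk hkn]
      field_simp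
    · -- cheb n k = 2*m*π - t
      have hr : ∀ r : ℕ, (r:ℝ)*t = -((r:ℝ)*cheb n k) + ((r*m : ℤ):ℝ)*(2*π) := by
        intro r
        have ht : t = -(cheb n k) + ((m : ℤ):ℝ)*(2*π) := by push_cast; linarith [hm]
        rw [ht]; push_cast; ring
      have hc : ∀ r : ℕ, Real.cos ((r:ℝ)*t) = Real.cos ((r:ℝ)*cheb n k) := by
        intro r; rw [hr r, Real.cos_add_int_mul_two_pi, Real.cos_neg]
      have hsn : Real.sin ((n:ℝ)*t) = -((-1:ℝ)^(k+1)) := by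
        rw [hr n, Real.sin_add_int_mul_two_pi, Real.sin_neg, sin_n_cheb hn]
      have hst : Real.sin t = -Real.sin (cheb n k) := by
        have := hr 1
        simp only [Nat.cast_one, one_mul] at this
        rw [this, Real.sin_add_int_mul_two_pi, Real.sin_neg]
      rw [hsn, hst]
      have hsum : ∀ j : ℕ, j ∈ Finset.range (n-1) →
          Real.cos (((j:ℝ)+1) * cheb n k) * Real.cos (((j:ℝ)+1) * t)
          = Real.cos (((j:ℝ)+1) * cheb n k) * Real.cos (((j:ℝ)+1) * cheb n k) := by
        intro j _
        have := hc (j+1)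
        push_cast at this
        rw [this]
      rw [Finset.sum_congr rfl hsum, sum_sq hk hkn]
      field_simp
      linear_combination hone
  · rw [P, if_neg hct]
    have hsub : Real.cos t - Real.cos (cheb n k) ≠ 0 := sub_ne_zero.mpr hct
    rw [pow_succ] at hkey
    have hinv : (1/(n:ℝ)) * n = 1 := by field_simp
    rw [div_eq_iff (mul_ne_zero hn' hsub)]
    linear_combination (-1:ℝ) * hkey - ((Real.cos t - Real.cos (cheb n k)) * (1 + 2 * ∑ j ∈ Finset.range (n-1), Real.cos (((j:ℝ)+1) * cheb n k) * Real.cos (((j:ℝ)+1) * t))) * hinv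

lemma S_eq (hk : 1 ≤ k) (hkn : k ≤ n) (t : ℝ) :
    S n k t = 1/(n:ℝ) + ∑ j ∈ Finset.range (n-1),
      (2/(n:ℝ) * (Real.cos (((j:ℝ)+1) * cheb n k) * Real.cos (((j:ℝ)+1) * (π/(2*(n:ℝ))))))
        * Real.cos (((j:ℝ)+1) * t) := by
  rw [S, P_eq hk hkn, P_eq hk hkn]
  have hAB : (∑ j ∈ Finset.range (n-1),
        Real.cos (((j:ℝ)+1) * cheb n k) * Real.cos (((j:ℝ)+1) * (t - π/(2*(n:ℝ)))))
      + (∑ j ∈ Finset.range (n-1),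
        Real.cos (((j:ℝ)+1) * cheb n k) * Real.cos (((j:ℝ)+1) * (t + π/(2*(n:ℝ)))))
      = ∑ j ∈ Finset.range (n-1),
        2 * (Real.cos (((j:ℝ)+1) * cheb n k) * Real.cos (((j:ℝ)+1) * (π/(2*(n:ℝ)))))
          * Real.cos (((j:ℝ)+1) * t) := by
    rw [← Finset.sum_add_distrib]
    refine Finset.sum_congr rfl fun j _ => ?_
    rw [mul_sub, mul_add, Real.cos_sub, Real.cos_add]
    ring
  have expand : ∑ j ∈ Finset.range (n-1),
      (2/(n:ℝ) * (Real.cos (((j:ℝ)+1) * cheb n k) * Real.cos (((j:ℝ)+1) * (π/(2*(n:ℝ))))))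
        * Real.cos (((j:ℝ)+1) * t)
      = (1/(n:ℝ)) * ∑ j ∈ Finset.range (n-1),
        2 * (Real.cos (((j:ℝ)+1) * cheb n k) * Real.cos (((j:ℝ)+1) * (π/(2*(n:ℝ)))))
          * Real.cos (((j:ℝ)+1) * t) := by
    rw [Finset.mul_sum]
    exact Finset.sum_congr rfl fun j _ => by ring
  rw [expand, ← hAB]
  ring

lemma intS (hk : 1 ≤ k) (hkn : k ≤ n) :
    (∫ t in (0:ℝ)..π, S n k t) = π/(n:ℝ) := by
  have hn : 1 ≤ n := le_trans hk hkn
  simp only [S_eq hk hkn]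
  have hint : ∀ j : ℕ, IntervalIntegrable (fun t : ℝ =>
      (2/(n:ℝ) * (Real.cos (((j:ℝ)+1) * cheb n k) * Real.cos (((j:ℝ)+1) * (π/(2*(n:ℝ))))))
        * Real.cos (((j:ℝ)+1) * t)) volume 0 π := by
    intro j
    apply Continuous.intervalIntegrable
    fun_prop
  have hintsum : IntervalIntegrable (fun t : ℝ => ∑ j ∈ Finset.range (n-1),
      (2/(n:ℝ) * (Real.cos (((j:ℝ)+1) * cheb n k) * Real.cos (((j:ℝ)+1) * (π/(2*(n:ℝ))))))
        * Real.cos (((j:ℝ)+1) * t)) volume 0 π := by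
    apply Continuous.intervalIntegrable
    apply continuous_finset_sum
    intro j _
    fun_prop
  rw [intervalIntegral.integral_add (intervalIntegrable_const) hintsum,
    intervalIntegral.integral_finset_sum (fun j _ => hint j)]
  have hzero : ∀ j : ℕ, (∫ t in (0:ℝ)..π,
      (2/(n:ℝ) * (Real.cos (((j:ℝ)+1) * cheb n k) * Real.cos (((j:ℝ)+1) * (π/(2*(n:ℝ))))))
        * Real.cos (((j:ℝ)+1) * t)) = 0 := by
    intro j
    rw [intervalIntegral.integral_const_mul]
    have : (∫ t in (0:ℝ)..π, Real.cos (((j:ℝ)+1) * t)) = 0 := by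
      rw [intervalIntegral.integral_comp_mul_left (fun x => Real.cos x)
        (by positivity : ((j:ℝ)+1) ≠ 0)]
      rw [integral_cos]
      have : ((j:ℝ)+1) * π = ((j+1 : ℕ):ℝ) * π := by push_cast; ring
      rw [mul_zero, this, Real.sin_nat_mul_pi, Real.sin_zero]
      simp
    rw [this, mul_zero]
  rw [Finset.sum_congr rfl fun j _ => hzero j]
  simp only [Finset.sum_const_zero, add_zero]
  simp
  ring

lemma sumS (hn : 1 ≤ n) (θ : ℝ) : ∑ k ∈ Finset.Icc 1 n, S n k θ = 1 := by
  have hn' : (n:ℝ) ≠ 0 := by positivity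
  have hmem : ∀ k ∈ Finset.Icc 1 n, S n k θ = 1/(n:ℝ) + ∑ j ∈ Finset.range (n-1),
      (2/(n:ℝ) * (Real.cos (((j:ℝ)+1) * cheb n k) * Real.cos (((j:ℝ)+1) * (π/(2*(n:ℝ))))))
        * Real.cos (((j:ℝ)+1) * θ) := by
    intro k hkmem
    obtain ⟨h1, h2⟩ := Finset.mem_Icc.mp hkmem
    exact S_eq h1 h2 θ
  rw [Finset.sum_congr rfl hmem, Finset.sum_add_distrib, Finset.sum_comm]
  have hinner : ∀ j ∈ Finset.range (n-1), ∑ k ∈ Finset.Icc 1 n,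
      (2/(n:ℝ) * (Real.cos (((j:ℝ)+1) * cheb n k) * Real.cos (((j:ℝ)+1) * (π/(2*(n:ℝ))))))
        * Real.cos (((j:ℝ)+1) * θ) = 0 := by
    intro j hj
    have h0 := sum_over_nodes hn (Finset.mem_range.mp hj)
    calc ∑ k ∈ Finset.Icc 1 n,
        (2/(n:ℝ) * (Real.cos (((j:ℝ)+1) * cheb n k) * Real.cos (((j:ℝ)+1) * (π/(2*(n:ℝ))))))
          * Real.cos (((j:ℝ)+1) * θ)
        = (∑ k ∈ Finset.Icc 1 n, Real.cos (((j:ℝ)+1) * cheb n k))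
          * (2/(n:ℝ) * Real.cos (((j:ℝ)+1) * (π/(2*(n:ℝ)))) * Real.cos (((j:ℝ)+1) * θ)) := by
          rw [Finset.sum_mul]
          exact Finset.sum_congr rfl fun k _ => by ring
      _ = 0 := by rw [h0, zero_mul]
  rw [Finset.sum_congr rfl hinner]
  simp only [Finset.sum_const_zero, add_zero, Finset.sum_const, Nat.card_Icc, nsmul_eq_mul]
  have : (n + 1 - 1 : ℕ) = n := by omega
  rw [this]
  field_simp

end basic

/-- The Grünwald–Durrmeyer operators reproduce constants: `D_n(1) = 1`. -/
theorem D_one (n : ℕ) (hn : 1 ≤ n) (θ : ℝ) (hθ : θ ∈ Set.Icc 0 π) :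
    D n (fun _ => (1:ℝ)) θ = 1 := by
  have hn' : (n:ℝ) ≠ 0 := by positivity
  rw [D]
  have hterm : ∀ k ∈ Finset.Icc 1 n,
      S n k θ * ∫ t in (0:ℝ)..π, (fun _ => (1:ℝ)) t * S n k t = S n k θ * (π/(n:ℝ)) := by
    intro k hkmem
    obtain ⟨h1, h2⟩ := Finset.mem_Icc.mp hkmem
    congr 1
    simp only [one_mul]
    exact intS h1 h2
  rw [Finset.sum_congr rfl hterm, ← Finset.sum_mul, sumS hn θ]
  field_simp
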